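/- A finite directed simple graph G = (V, A) without loops is a pedigree if and only if the following three conditions hold: (i) G is acyclic, (ii) the mate graph M(G) is bipartite, and (iii) no vertex of G has exactly one incoming arc. -/

import Mathlib

/-- The mate graph `M(G)` of a directed graph `G` given by arc relation `A`:
distinct vertices `u` and `v` are adjacent iff they have a common child. -/
def mateGraph {V : Type*} (A : V → V → Prop) : SimpleGraph V where
  Adj u v := u ≠ v ∧ ∃ w, A u w ∧ A v w
  symm := by
    constructor
    intro u v h
    exact ⟨h.1.symm, h.2.imp fun w hw => ⟨hw.2, hw.1⟩⟩
  loopless := by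
    constructor
    intro u h
    exact h.1 rfl

/-- A directed acyclic graph is a pedigree if its vertex set splits into disjoint sets
`M` and `F` such that every vertex either has no incoming arc, or exactly two incoming
arcs, one from a vertex of `M` and one from a vertex of `F`. -/
def IsPedigree {V : Type*} (A : V → V → Prop) : Prop :=
  (∀ v, ¬ Relation.TransGen A v v) ∧
  ∃ M F : Set V, Disjoint M F ∧ M ∪ F = Set.univ ∧
    ∀ x : V, (∀ u, ¬ A u x) ∨
      ∃ u v : V, u ∈ M ∧ v ∈ F ∧ A u x ∧ A v x ∧ ∀ w, A w x → w = u ∨ w = v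

lemma fin2_three (a b d : Fin 2) (h : d ≠ b) (h1 : a ≠ b) (h2 : a ≠ d) : False := by
  revert a b d; decide

lemma fin2_two (a b : Fin 2) (h : a ≠ b) : (a = 0 ∧ b = 1) ∨ (a = 1 ∧ b = 0) := by
  revert a b; decide

/-- A finite directed simple loopless graph `G` is a pedigree if and only if
(i) `G` is acyclic, (ii) the mate graph `M(G)` is bipartite, and
(iii) no vertex of `G` has exactly one incoming arc. -/
theorem isPedigree_iff {V : Type*} [Fintype V] (A : V → V → Prop)
    (hloopless : ∀ v, ¬ A v v) :
    IsPedigree A ↔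
      ((∀ v, ¬ Relation.TransGen A v v) ∧
       (mateGraph A).Colorable 2 ∧
       ∀ x : V, ¬ (∃! u, A u x)) := by
  classical
  constructor
  · rintro ⟨hacyc, M, F, hdisj, huniv, hped⟩
    refine ⟨hacyc, ?_, ?_⟩
    · refine ⟨SimpleGraph.Coloring.mk (fun u => if u ∈ M then 0 else 1) ?_⟩
      rintro u v ⟨hne, w, hu, hv⟩
      rcases hped w with h0 | ⟨p, q, hpM, hqF, hpA, hqA, hall⟩
      · exact absurd hu (h0 u)
      · have hqM : q ∉ M := fun h => Set.disjoint_left.mp hdisj h hqF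
        rcases hall u hu with rfl | rfl <;> rcases hall v hv with rfl | rfl
        · exact absurd rfl hne
        · simp [hpM, hqM]
        · simp [hpM, hqM]
        · exact absurd rfl hne
    · rintro x ⟨u, hu, huniq⟩
      rcases hped x with h0 | ⟨p, q, hpM, hqF, hpA, hqA, hall⟩
      · exact h0 u hu
      · have hp : p = u := huniq p hpA
        have hq : q = u := huniq q hqA
        have hpF : p ∈ F := (hp.trans hq.symm) ▸ hqF
        exact Set.disjoint_left.mp hdisj hpM hpF
  · rintro ⟨hacyc, ⟨c⟩, hiii⟩
    refine ⟨hacyc, c ⁻¹' {0}, c ⁻¹' {1}, ?_, ?_, ?_⟩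
    · rw [Set.disjoint_left]
      intro a h0 h1
      simp only [Set.mem_preimage, Set.mem_singleton_iff] at h0 h1
      rw [h0] at h1; exact absurd h1 (by decide)
    · ext a
      simp only [Set.mem_union, Set.mem_preimage, Set.mem_singleton_iff, Set.mem_univ,
        iff_true]
      rcases fin2_two (c a) (c a + 1) (by revert c; intro c; omega) with ⟨h, _⟩ | ⟨h, _⟩
      · exact Or.inl h
      · exact Or.inr h
    · intro x
      by_cases hx : ∃ u, A u x
      · obtain ⟨u, hu⟩ := hx
        right
        have hne : ∃ v, A v x ∧ v ≠ u := by
          by_contra h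
          push_neg at h
          exact hiii x ⟨u, hu, fun v hv => h v hv⟩
        obtain ⟨v, hv, hvu⟩ := hne
        have hcc : c v ≠ c u := c.valid ⟨hvu, x, hv, hu⟩
        have hall : ∀ w, A w x → w = u ∨ w = v := by
          intro w hw
          by_contra h
          push_neg at h
          have h1 : c w ≠ c u := c.valid ⟨h.1, x, hw, hu⟩
          have h2 : c w ≠ c v := c.valid ⟨h.2, x, hw, hv⟩
          exact fin2_three (c w) (c u) (c v) hcc h1 h2
        rcases fin2_two (c v) (c u) hcc with ⟨h0, h1⟩ | ⟨h1, h0⟩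
        · exact ⟨v, u, h0, h1, hv, hu, fun w hw => (hall w hw).symm⟩
        · exact ⟨u, v, h0, h1, hu, hv, hall⟩
      · left
        push_neg at hx
        exact hx
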